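/- In a full-information graph approximation protocol: if R is a root component of G_r and every process q ∈ R at round r causally influences p by round r' > r, then R is a root component of p's approximation A_p^{r'}(r) of the round-r graph; moreover, for every q ∈ R there exist q' and r'' ∈ (r, r'] with (q → q') ∈ A_p^{r'}(r''). -/

import Mathlib

variable {V : Type*}

/-- All graphs in the sequence contain all self-loops. -/
def SelfLoops (G : ℕ → V → V → Prop) : Prop := ∀ s v, G s v v

/-- `R` is a root component of the digraph `E`: a strongly connected component
(mutual reachability inside, maximal) with no in-edges from outside. -/
def IsRoot (E : V → V → Prop) (R : Set V) : Prop :=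
  R.Nonempty ∧
  (∀ q ∈ R, ∀ q' ∈ R, Relation.ReflTransGen E q q') ∧
  (∀ v : V, (∃ q ∈ R, Relation.ReflTransGen E q v ∧ Relation.ReflTransGen E v q) → v ∈ R) ∧
  (∀ q' q : V, q' ∉ R → q ∈ R → ¬ E q' q)

/-- Causal influence: `(q,r) ⤳ (p,r')`. -/
inductive Infl (G : ℕ → V → V → Prop) : V → ℕ → V → ℕ → Prop
  | refl (q r) : Infl G q r q r
  | step {q r q' s p r'} (h1 : r < s) (h2 : s ≤ r') (he : G s q q')
      (ht : Infl G q' s p r') : Infl G q r p r'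

/-- Semantic full-information approximation: edge `(q → q')` of round `s`
is in `p`'s approximation at end of round `r'`. -/
def Approx (G : ℕ → V → V → Prop) (p : V) (r' s : ℕ) (q q' : V) : Prop :=
  G s q q' ∧ Infl G q' s p r'

theorem root_detection (G : ℕ → V → V → Prop) (R : Set V) (p : V) (r r' : ℕ)
    (hrr : r < r') (hroot : IsRoot (G r) R)
    (hinfl : ∀ q ∈ R, Infl G q r p r') :
    IsRoot (fun x y => Approx G p r' r x y) R ∧
      ∀ q ∈ R, ∃ (q' : V) (r'' : ℕ), r < r'' ∧ r'' ≤ r' ∧ Approx G p r' r'' q q' := by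
  obtain ⟨hne, hconn, hmax, hin⟩ := hroot
  -- lift paths in G r inside R to Approx paths
  have key : ∀ q ∈ R, ∀ v, Relation.ReflTransGen (G r) q v → v ∈ R →
      Relation.ReflTransGen (fun x y => Approx G p r' r x y) q v := by
    intro q hq v hpath
    induction hpath with
    | refl => intro _; exact Relation.ReflTransGen.refl
    | tail hqb hbv ih =>
      rename_i b v
      intro hv
      have hbR : b ∈ R := hmax b ⟨q, hq, hqb,
        Relation.ReflTransGen.head hbv (hconn v hv q hq)⟩
      exact Relation.ReflTransGen.tail (ih hbR) ⟨hbv, hinfl v hv⟩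
  refine ⟨⟨hne, ?_, ?_, ?_⟩, ?_⟩
  · intro q hq q' hq'
    exact key q hq q' (hconn q hq q' hq') hq'
  · intro v ⟨q, hq, h1, h2⟩
    have mono : ∀ a b, Relation.ReflTransGen (fun x y => Approx G p r' r x y) a b →
        Relation.ReflTransGen (G r) a b := fun a b h =>
      Relation.ReflTransGen.mono (fun x y (e : Approx G p r' r x y) => e.1) a b h
    exact hmax v ⟨q, hq, mono _ _ h1, mono _ _ h2⟩
  · intro q' q hq' hq he
    exact hin q' q hq' hq he.1
  · intro q hq
    cases hinfl q hq with
    | refl => omega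
    | step h1 h2 he ht => exact ⟨_, _, h1, h2, he, ht⟩
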